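/- Let K be an algebraically closed field, complete with respect to a nontrivial non-Archimedean absolute value. Order 𝔸¹_Berk(K) by ξ ≤ ξ' iff ‖f‖_ξ ≤ ‖f‖_{ξ'} for all f ∈ K[X]. Then every pair of points ξ, ξ' ∈ 𝔸¹_Berk(K) has a (necessarily unique) least upper bound ξ ∨ ξ' with respect to this partial order. -/

import Mathlib

open Polynomial Filter

/-- A non-Archimedean absolute value on a field `K`. -/
def IsNonarchAbs {K : Type*} [Field K] (abv : K → ℝ) : Prop :=
  (∀ x, 0 ≤ abv x) ∧ (∀ x, abv x = 0 ↔ x = 0) ∧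
  (∀ x y, abv (x * y) = abv x * abv y) ∧
  (∀ x y, abv (x + y) ≤ max (abv x) (abv y))

/-- A multiplicative seminorm on `K[X]` extending the absolute value `abv`. -/
def IsMultSeminorm {K : Type*} [Field K] (abv : K → ℝ) (N : Polynomial K → ℝ) : Prop :=
  (∀ f, 0 ≤ N f) ∧ (∀ c : K, N (C c) = abv c) ∧
  (∀ f g, N (f + g) ≤ N f + N g) ∧ (∀ f g, N (f * g) = N f * N g)

/-- The Berkovich affine line over `(K, abv)`. -/
abbrev BerkLine (K : Type*) [Field K] (abv : K → ℝ) :=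
  {N : Polynomial K → ℝ // IsMultSeminorm abv N}

section Helpers

variable {K : Type*} [Field K] {abv : K → ℝ}

theorem BerkAux.abv_zero (habv : IsNonarchAbs abv) : abv 0 = 0 := (habv.2.1 0).mpr rfl

theorem BerkAux.abv_one (habv : IsNonarchAbs abv) : abv 1 = 1 := by
  have h := habv.2.2.1 1 1
  rw [mul_one] at h
  have h1 : abv 1 ≠ 0 := fun h0 => one_ne_zero ((habv.2.1 1).mp h0)
  have h2 : abv 1 * 1 = abv 1 * abv 1 := by linarith
  exact (mul_left_cancel₀ h1 h2).symm

theorem BerkAux.abv_neg (habv : IsNonarchAbs abv) (x : K) : abv (-x) = abv x := by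
  have hm1 : abv (-1 : K) = 1 := by
    have h := habv.2.2.1 (-1) (-1)
    rw [neg_mul_neg, one_mul, BerkAux.abv_one habv] at h
    have h2 : (abv (-1 : K) - 1) * (abv (-1 : K) + 1) = 0 := by nlinarith
    rcases mul_eq_zero.mp h2 with h3 | h3
    · linarith
    · linarith [habv.1 (-1 : K)]
  calc abv (-x) = abv ((-1) * x) := by ring_nf
  _ = abv (-1 : K) * abv x := habv.2.2.1 _ _
  _ = abv x := by rw [hm1, one_mul]

theorem BerkAux.abv_sub_comm (habv : IsNonarchAbs abv) (x y : K) :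
    abv (x - y) = abv (y - x) := by
  rw [← BerkAux.abv_neg habv (x - y), neg_sub]

theorem BerkAux.abv_natCast_le_one (habv : IsNonarchAbs abv) (n : ℕ) : abv (n : K) ≤ 1 := by
  induction n with
  | zero => simp [BerkAux.abv_zero habv]
  | succ n ih =>
    push_cast
    calc abv ((n : K) + 1) ≤ max (abv (n : K)) (abv 1) := habv.2.2.2 _ _
    _ ≤ 1 := max_le ih (le_of_eq (BerkAux.abv_one habv))

/-- Isosceles triangle principle. -/
theorem BerkAux.abv_add_eq (habv : IsNonarchAbs abv) {x y : K} (h : abv y < abv x) :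
    abv (x + y) = abv x := by
  have key : abv x ≤ max (abv (x + y)) (abv y) := by
    have hx : x = (x + y) + (-y) := by ring
    calc abv x = abv ((x + y) + (-y)) := by rw [← hx]
    _ ≤ max (abv (x + y)) (abv (-y)) := habv.2.2.2 _ _
    _ = max (abv (x + y)) (abv y) := by rw [BerkAux.abv_neg habv]
  refine le_antisymm (le_trans (habv.2.2.2 x y) (by rw [max_eq_left h.le])) ?_
  by_contra hlt
  push_neg at hlt
  rcases max_cases (abv (x + y)) (abv y) with ⟨h1, _⟩ | ⟨h1, _⟩ <;> rw [h1] at key <;> linarith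

theorem BerkAux.abv_sum_le (habv : IsNonarchAbs abv) {ι : Type*} {s : Finset ι} {φ : ι → K}
    {B : ℝ} (hB : 0 ≤ B) (h : ∀ i ∈ s, abv (φ i) ≤ B) : abv (∑ i ∈ s, φ i) ≤ B := by
  classical
  induction s using Finset.cons_induction with
  | empty => simpa [BerkAux.abv_zero habv] using hB
  | cons a s ha ih =>
    rw [Finset.sum_cons]
    refine le_trans (habv.2.2.2 _ _) (max_le (h a (Finset.mem_cons_self a s)) ?_)
    exact ih fun i hi => h i (Finset.mem_cons_of_mem hi)

theorem BerkAux.abv_sum_lt (habv : IsNonarchAbs abv) {ι : Type*} {s : Finset ι} {φ : ι → K}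
    {B : ℝ} (hB : 0 < B) (h : ∀ i ∈ s, abv (φ i) < B) : abv (∑ i ∈ s, φ i) < B := by
  classical
  induction s using Finset.cons_induction with
  | empty => simpa [BerkAux.abv_zero habv] using hB
  | cons a s ha ih =>
    rw [Finset.sum_cons]
    refine lt_of_le_of_lt (habv.2.2.2 _ _) (max_lt (h a (Finset.mem_cons_self a s)) ?_)
    exact ih fun i hi => h i (Finset.mem_cons_of_mem hi)

end Helpers

section Seminorm

variable {K : Type*} [Field K] {abv : K → ℝ} {N : Polynomial K → ℝ}

theorem BerkAux.N_zero (habv : IsNonarchAbs abv) (hN : IsMultSeminorm abv N) : N 0 = 0 := by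
  have := hN.2.1 0
  rwa [map_zero, BerkAux.abv_zero habv] at this

theorem BerkAux.N_one (habv : IsNonarchAbs abv) (hN : IsMultSeminorm abv N) : N 1 = 1 := by
  have := hN.2.1 1
  rwa [map_one, BerkAux.abv_one habv] at this

theorem BerkAux.N_C_mul (hN : IsMultSeminorm abv N) (c : K) (f : Polynomial K) :
    N (C c * f) = abv c * N f := by rw [hN.2.2.2, hN.2.1]

theorem BerkAux.N_neg (habv : IsNonarchAbs abv) (hN : IsMultSeminorm abv N)
    (f : Polynomial K) : N (-f) = N f := by
  have : (-f) = C (-1) * f := by rw [map_neg, map_one]; ring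
  rw [this, BerkAux.N_C_mul hN, BerkAux.abv_neg habv, BerkAux.abv_one habv, one_mul]

theorem BerkAux.N_pow (habv : IsNonarchAbs abv) (hN : IsMultSeminorm abv N) (f : Polynomial K) (n : ℕ) :
    N (f ^ n) = N f ^ n := by
  induction n with
  | zero => simpa [BerkAux.abv_one habv] using hN.2.1 1
  | succ n ih => rw [pow_succ, pow_succ, hN.2.2.2, ih]

theorem BerkAux.N_sum_le (habv : IsNonarchAbs abv) (hN : IsMultSeminorm abv N)
    {ι : Type*} (s : Finset ι) (φ : ι → Polynomial K) :
    N (∑ i ∈ s, φ i) ≤ ∑ i ∈ s, N (φ i) := by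
  classical
  induction s using Finset.cons_induction with
  | empty => simp [BerkAux.N_zero habv hN]
  | cons a s ha ih =>
    rw [Finset.sum_cons, Finset.sum_cons]
    exact le_trans (hN.2.2.1 _ _) (by linarith)

/-- The strong (ultrametric) triangle inequality for a multiplicative seminorm
extending a non-Archimedean absolute value. -/
theorem BerkAux.N_add_le_max (habv : IsNonarchAbs abv) (hN : IsMultSeminorm abv N)
    (f g : Polynomial K) : N (f + g) ≤ max (N f) (N g) := by
  set M := max (N f) (N g) with hM
  have hM0 : 0 ≤ M := le_trans (hN.1 f) (le_max_left _ _)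
  have hf : N f ≤ M := le_max_left _ _
  have hg : N g ≤ M := le_max_right _ _
  have key : ∀ n : ℕ, N (f + g) ^ n ≤ (n + 1) * M ^ n := by
    intro n
    rw [← BerkAux.N_pow habv hN, add_pow]
    calc N (∑ k ∈ Finset.range (n + 1), f ^ k * g ^ (n - k) * (n.choose k : Polynomial K))
        ≤ ∑ k ∈ Finset.range (n + 1), N (f ^ k * g ^ (n - k) * (n.choose k : Polynomial K)) :=
          BerkAux.N_sum_le habv hN _ _
      _ ≤ ∑ _k ∈ Finset.range (n + 1), M ^ n := by
          refine Finset.sum_le_sum fun k hk => ?_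
          rw [Finset.mem_range] at hk
          have hcast : (n.choose k : Polynomial K) = C ((n.choose k : K)) := by
            simp
          rw [hcast, mul_comm, BerkAux.N_C_mul hN, hN.2.2.2, BerkAux.N_pow habv hN,
            BerkAux.N_pow habv hN]
          have h1 : N f ^ k * N g ^ (n - k) ≤ M ^ k * M ^ (n - k) :=
            mul_le_mul (pow_le_pow_left₀ (hN.1 f) hf k) (pow_le_pow_left₀ (hN.1 g) hg _)
              (pow_nonneg (hN.1 g) _) (pow_nonneg hM0 _)
          have h2 : M ^ k * M ^ (n - k) = M ^ n := by
            rw [← pow_add]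
            congr 1
            omega
          calc abv ((n.choose k : K)) * (N f ^ k * N g ^ (n - k))
              ≤ 1 * (M ^ k * M ^ (n - k)) := by
                refine mul_le_mul (BerkAux.abv_natCast_le_one habv _) h1 ?_ one_pos.le
                exact mul_nonneg (pow_nonneg (hN.1 f) _) (pow_nonneg (hN.1 g) _)
            _ = M ^ n := by rw [one_mul, h2]
      _ = (n + 1) * M ^ n := by
          rw [Finset.sum_const, Finset.card_range, nsmul_eq_mul]
          push_cast
          ring
  by_contra hcon
  push_neg at hcon
  set t := N (f + g) with ht
  have ht0 : 0 < t := lt_of_le_of_lt hM0 hcon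
  set r := M / t with hr
  have hr0 : 0 ≤ r := div_nonneg hM0 ht0.le
  have hr1 : r < 1 := (div_lt_one ht0).mpr hcon
  have hrt : r * t = M := div_mul_cancel₀ M ht0.ne'
  have hone : ∀ n : ℕ, (1 : ℝ) ≤ ((n : ℝ) + 1) * r ^ n := by
    intro n
    have h1 : t ^ n ≤ ((n : ℝ) + 1) * (r ^ n * t ^ n) := by
      have := key n
      rw [← hrt, mul_pow] at this
      linarith [this]
    have h2 : 0 < t ^ n := pow_pos ht0 n
    rw [← mul_assoc] at h1
    nlinarith
  have hlim : Tendsto (fun n : ℕ => ((n : ℝ) + 1) * r ^ n) atTop (nhds 0) := by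
    have h1 : Tendsto (fun n : ℕ => (n : ℝ) * r ^ n) atTop (nhds 0) := by
      have := summable_pow_mul_geometric_of_norm_lt_one (R := ℝ) 1
        (r := r) (by rwa [Real.norm_eq_abs, abs_of_nonneg hr0])
      simpa using this.tendsto_atTop_zero
    have h2 : Tendsto (fun n : ℕ => r ^ n) atTop (nhds 0) :=
      tendsto_pow_atTop_nhds_zero_of_lt_one hr0 hr1
    have := h1.add h2
    simpa [add_mul] using this
  have : (1 : ℝ) ≤ 0 := ge_of_tendsto' hlim hone
  linarith

end Seminorm

section Gauss

variable {K : Type*} [Field K] {abv : K → ℝ}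

/-- The Gauss norm of radius `R` (centered at `0`). -/
noncomputable def BerkAux.G (abv : K → ℝ) (R : ℝ) (f : Polynomial K) : ℝ :=
  (Finset.range (f.natDegree + 1)).sup' Finset.nonempty_range_add_one
    (fun k => abv (f.coeff k) * R ^ k)

theorem BerkAux.G_nonneg (habv : IsNonarchAbs abv) {R : ℝ} (hR : 0 ≤ R) (f : Polynomial K) :
    0 ≤ BerkAux.G abv R f := by
  refine le_trans ?_ (Finset.le_sup' (fun k => abv (f.coeff k) * R ^ k)
    (Finset.mem_range.mpr (Nat.succ_pos _)))
  exact mul_nonneg (habv.1 _) (pow_nonneg hR 0)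

theorem BerkAux.G_coeff_le (habv : IsNonarchAbs abv) {R : ℝ} (hR : 0 ≤ R) (f : Polynomial K)
    (k : ℕ) : abv (f.coeff k) * R ^ k ≤ BerkAux.G abv R f := by
  by_cases hk : k ≤ f.natDegree
  · exact Finset.le_sup' (fun k => abv (f.coeff k) * R ^ k)
      (Finset.mem_range.mpr (Nat.lt_succ_of_le hk))
  · push_neg at hk
    rw [Polynomial.coeff_eq_zero_of_natDegree_lt hk, BerkAux.abv_zero habv, zero_mul]
    exact BerkAux.G_nonneg habv hR f

theorem BerkAux.G_exists (abv : K → ℝ) (R : ℝ) (f : Polynomial K) :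
    ∃ k, BerkAux.G abv R f = abv (f.coeff k) * R ^ k := by
  obtain ⟨k, -, hk⟩ := Finset.exists_mem_eq_sup' Finset.nonempty_range_add_one
    (fun k => abv (f.coeff k) * R ^ k)
  exact ⟨k, hk⟩

theorem BerkAux.G_le (abv : K → ℝ) (R : ℝ) (f : Polynomial K) {B : ℝ}
    (h : ∀ k, abv (f.coeff k) * R ^ k ≤ B) : BerkAux.G abv R f ≤ B :=
  Finset.sup'_le _ _ fun k _ => h k

theorem BerkAux.G_C (habv : IsNonarchAbs abv) {R : ℝ} (hR : 0 ≤ R) (c : K) :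
    BerkAux.G abv R (C c) = abv c := by
  refine le_antisymm (BerkAux.G_le abv R _ fun k => ?_) ?_
  · rcases Nat.eq_zero_or_pos k with hk | hk
    · simp [hk]
    · rw [Polynomial.coeff_C, if_neg hk.ne', BerkAux.abv_zero habv, zero_mul]
      exact habv.1 c
  · simpa using BerkAux.G_coeff_le habv hR (C c) 0

theorem BerkAux.G_add_le_max (habv : IsNonarchAbs abv) {R : ℝ} (hR : 0 ≤ R)
    (f g : Polynomial K) :
    BerkAux.G abv R (f + g) ≤ max (BerkAux.G abv R f) (BerkAux.G abv R g) := by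
  obtain ⟨k, hk⟩ := BerkAux.G_exists abv R (f + g)
  rw [hk, Polynomial.coeff_add]
  calc abv (f.coeff k + g.coeff k) * R ^ k
      ≤ max (abv (f.coeff k)) (abv (g.coeff k)) * R ^ k :=
        mul_le_mul_of_nonneg_right (habv.2.2.2 _ _) (pow_nonneg hR k)
    _ = max (abv (f.coeff k) * R ^ k) (abv (g.coeff k) * R ^ k) :=
        (max_mul_of_nonneg _ _ (pow_nonneg hR k))
    _ ≤ max (BerkAux.G abv R f) (BerkAux.G abv R g) :=
        max_le_max (BerkAux.G_coeff_le habv hR f k) (BerkAux.G_coeff_le habv hR g k)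

theorem BerkAux.G_eq_zero (habv : IsNonarchAbs abv) {R : ℝ} (hR0 : 0 < R) {f : Polynomial K}
    (hf : BerkAux.G abv R f = 0) : f = 0 := by
  ext k
  have h1 := BerkAux.G_coeff_le habv hR0.le f k
  rw [hf] at h1
  have h2 : 0 ≤ abv (f.coeff k) * R ^ k := mul_nonneg (habv.1 _) (pow_nonneg hR0.le k)
  have h3 : abv (f.coeff k) * R ^ k = 0 := le_antisymm h1 h2
  have h4 : abv (f.coeff k) = 0 := by
    rcases mul_eq_zero.mp h3 with h | h
    · exact h
    · exact absurd h (pow_ne_zero k hR0.ne')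
  simpa using (habv.2.1 _).mp h4

theorem BerkAux.G_mul (habv : IsNonarchAbs abv) {R : ℝ} (hR : 0 ≤ R) (f g : Polynomial K) :
    BerkAux.G abv R (f * g) = BerkAux.G abv R f * BerkAux.G abv R g := by
  classical
  rcases eq_or_lt_of_le hR with hR0 | hR0
  · -- R = 0 : the Gauss norm is `abv` of the constant coefficient
    have hG0 : ∀ h : Polynomial K, BerkAux.G abv 0 h = abv (h.coeff 0) := by
      intro h
      refine le_antisymm (BerkAux.G_le abv 0 _ fun k => ?_) ?_
      · rcases Nat.eq_zero_or_pos k with hk | hk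
        · simp [hk]
        · rw [zero_pow hk.ne', mul_zero]
          exact habv.1 _
      · simpa using BerkAux.G_coeff_le habv le_rfl h 0
    rw [← hR0, hG0, hG0, hG0, Polynomial.mul_coeff_zero, habv.2.2.1]
  -- R > 0
  have hRk : ∀ k : ℕ, (0:ℝ) < R ^ k := fun k => pow_pos hR0 k
  refine le_antisymm ?_ ?_
  · obtain ⟨k, hk⟩ := BerkAux.G_exists abv R (f * g)
    rw [hk, Polynomial.coeff_mul]
    have hB : 0 ≤ BerkAux.G abv R f * BerkAux.G abv R g / R ^ k :=
      div_nonneg (mul_nonneg (BerkAux.G_nonneg habv hR f) (BerkAux.G_nonneg habv hR g))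
        (hRk k).le
    rw [← div_mul_cancel₀ (BerkAux.G abv R f * BerkAux.G abv R g) (hRk k).ne']
    refine mul_le_mul_of_nonneg_right ?_ (hRk k).le
    refine BerkAux.abv_sum_le habv hB fun x hx => ?_
    rw [Finset.HasAntidiagonal.mem_antidiagonal] at hx
    rw [le_div_iff₀ (hRk k), habv.2.2.1, ← hx, pow_add]
    calc abv (f.coeff x.1) * abv (g.coeff x.2) * (R ^ x.1 * R ^ x.2)
        = (abv (f.coeff x.1) * R ^ x.1) * (abv (g.coeff x.2) * R ^ x.2) := by ring
      _ ≤ BerkAux.G abv R f * BerkAux.G abv R g :=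
          mul_le_mul (BerkAux.G_coeff_le habv hR f _) (BerkAux.G_coeff_le habv hR g _)
            (mul_nonneg (habv.1 _) (hRk _).le) (BerkAux.G_nonneg habv hR f)
  · -- ≥ direction
    by_cases hf0 : BerkAux.G abv R f = 0
    · rw [hf0, zero_mul]
      exact BerkAux.G_nonneg habv hR _
    by_cases hg0 : BerkAux.G abv R g = 0
    · rw [hg0, mul_zero]
      exact BerkAux.G_nonneg habv hR _
    have hfpos : 0 < BerkAux.G abv R f := lt_of_le_of_ne (BerkAux.G_nonneg habv hR f) (Ne.symm hf0)
    have hgpos : 0 < BerkAux.G abv R g := lt_of_le_of_ne (BerkAux.G_nonneg habv hR g) (Ne.symm hg0)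
    have hPf : ∃ i, abv (f.coeff i) * R ^ i = BerkAux.G abv R f :=
      (BerkAux.G_exists abv R f).imp fun i h => h.symm
    have hPg : ∃ j, abv (g.coeff j) * R ^ j = BerkAux.G abv R g :=
      (BerkAux.G_exists abv R g).imp fun j h => h.symm
    set i₀ := Nat.find hPf with hi₀
    set j₀ := Nat.find hPg with hj₀
    have hfi : abv (f.coeff i₀) * R ^ i₀ = BerkAux.G abv R f := Nat.find_spec hPf
    have hgj : abv (g.coeff j₀) * R ^ j₀ = BerkAux.G abv R g := Nat.find_spec hPg
    have hfmin : ∀ i < i₀, abv (f.coeff i) * R ^ i < BerkAux.G abv R f := fun i hi =>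
      lt_of_le_of_ne (BerkAux.G_coeff_le habv hR f i) (Nat.find_min hPf hi)
    have hgmin : ∀ j < j₀, abv (g.coeff j) * R ^ j < BerkAux.G abv R g := fun j hj =>
      lt_of_le_of_ne (BerkAux.G_coeff_le habv hR g j) (Nat.find_min hPg hj)
    set k := i₀ + j₀ with hkdef
    have hmem : (i₀, j₀) ∈ Finset.HasAntidiagonal.antidiagonal k := Finset.HasAntidiagonal.mem_antidiagonal.mpr rfl
    have hmain : abv (f.coeff i₀ * g.coeff j₀) * R ^ k
        = BerkAux.G abv R f * BerkAux.G abv R g := by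
      rw [habv.2.2.1, hkdef, pow_add, ← hfi, ← hgj]; ring
    have hmainpos : 0 < abv (f.coeff i₀ * g.coeff j₀) := by
      have : 0 < abv (f.coeff i₀ * g.coeff j₀) * R ^ k := by
        rw [hmain]; exact mul_pos hfpos hgpos
      nlinarith [hRk k, habv.1 (f.coeff i₀ * g.coeff j₀)]
    have hrest : abv (∑ x ∈ (Finset.HasAntidiagonal.antidiagonal k).erase (i₀, j₀),
        f.coeff x.1 * g.coeff x.2) < abv (f.coeff i₀ * g.coeff j₀) := by
      refine BerkAux.abv_sum_lt habv hmainpos fun x hx => ?_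
      have hxmem := Finset.mem_of_mem_erase hx
      have hxne := Finset.ne_of_mem_erase hx
      rw [Finset.HasAntidiagonal.mem_antidiagonal] at hxmem
      have hterm : abv (f.coeff x.1 * g.coeff x.2) * R ^ k
          < BerkAux.G abv R f * BerkAux.G abv R g := by
        rw [habv.2.2.1, ← hxmem, pow_add]
        have hcase : x.1 < i₀ ∨ x.2 < j₀ := by
          by_contra hc
          push_neg at hc
          have : x.1 = i₀ ∧ x.2 = j₀ := by omega
          exact hxne (Prod.ext this.1 this.2)
        have hexp : abv (f.coeff x.1) * abv (g.coeff x.2) * (R ^ x.1 * R ^ x.2)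
            = (abv (f.coeff x.1) * R ^ x.1) * (abv (g.coeff x.2) * R ^ x.2) := by ring
        rw [hexp]
        rcases hcase with hc | hc
        · calc (abv (f.coeff x.1) * R ^ x.1) * (abv (g.coeff x.2) * R ^ x.2)
              ≤ (abv (f.coeff x.1) * R ^ x.1) * BerkAux.G abv R g :=
                mul_le_mul_of_nonneg_left (BerkAux.G_coeff_le habv hR g _)
                  (mul_nonneg (habv.1 _) (hRk _).le)
            _ < BerkAux.G abv R f * BerkAux.G abv R g :=
                mul_lt_mul_of_pos_right (hfmin _ hc) hgpos
        · calc (abv (f.coeff x.1) * R ^ x.1) * (abv (g.coeff x.2) * R ^ x.2)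
              ≤ BerkAux.G abv R f * (abv (g.coeff x.2) * R ^ x.2) :=
                mul_le_mul_of_nonneg_right (BerkAux.G_coeff_le habv hR f _)
                  (mul_nonneg (habv.1 _) (hRk _).le)
            _ < BerkAux.G abv R f * BerkAux.G abv R g :=
                mul_lt_mul_of_pos_left (hgmin _ hc) hfpos
      rw [← hmain] at hterm
      exact lt_of_mul_lt_mul_right hterm (hRk k).le |>.trans_le le_rfl
    have hcoeff : abv ((f * g).coeff k) = abv (f.coeff i₀ * g.coeff j₀) := by
      rw [Polynomial.coeff_mul, ← Finset.add_sum_erase _ _ hmem]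
      exact BerkAux.abv_add_eq habv hrest
    calc BerkAux.G abv R f * BerkAux.G abv R g
        = abv ((f * g).coeff k) * R ^ k := by rw [hcoeff, hmain]
      _ ≤ BerkAux.G abv R (f * g) := BerkAux.G_coeff_le habv hR _ k

theorem BerkAux.G_X_add_C (habv : IsNonarchAbs abv) {R : ℝ} (hR : 0 ≤ R) (a : K) :
    BerkAux.G abv R (X + C a) = max (abv a) R := by
  refine le_antisymm (BerkAux.G_le abv R _ fun k => ?_) ?_
  · match k with
    | 0 => simpa using le_max_left (abv a) R
    | 1 =>
      simp only [Polynomial.coeff_add, Polynomial.coeff_X_one, Polynomial.coeff_C, pow_one]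
      rw [if_neg one_ne_zero, add_zero, BerkAux.abv_one habv, one_mul]
      exact le_max_right _ _
    | (n + 2) =>
      have : (X + C a : Polynomial K).coeff (n + 2) = 0 := by
        rw [Polynomial.coeff_add, Polynomial.coeff_C, if_neg (by omega)]
        simp [Polynomial.coeff_X]
      rw [this, BerkAux.abv_zero habv, zero_mul]
      exact le_trans (habv.1 a) (le_max_left _ _)
  · refine max_le ?_ ?_
    · have := BerkAux.G_coeff_le habv hR (X + C a) 0
      simpa using this
    · have := BerkAux.G_coeff_le habv hR (X + C a) 1
      simp only [Polynomial.coeff_add, Polynomial.coeff_X_one, Polynomial.coeff_C, pow_one] at this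
      rwa [if_neg one_ne_zero, add_zero, BerkAux.abv_one habv, one_mul] at this

end Gauss

section Factorization

variable {K : Type*} [Field K] {abv : K → ℝ} {N N₁ N₂ : Polynomial K → ℝ}

theorem BerkAux.multiset_prod_nonneg (s : Multiset K) (p : K → ℝ) (hp : ∀ a, 0 ≤ p a) :
    0 ≤ (s.map p).prod := by
  induction s using Multiset.induction_on with
  | empty => simp
  | cons a s ih => rw [Multiset.map_cons, Multiset.prod_cons]; exact mul_nonneg (hp a) ih

theorem BerkAux.multiset_prod_le (s : Multiset K) (p q : K → ℝ) (hp : ∀ a, 0 ≤ p a)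
    (hpq : ∀ a, p a ≤ q a) : (s.map p).prod ≤ (s.map q).prod := by
  induction s using Multiset.induction_on with
  | empty => simp
  | cons a s ih =>
    rw [Multiset.map_cons, Multiset.prod_cons, Multiset.map_cons, Multiset.prod_cons]
    exact mul_le_mul (hpq a) ih (BerkAux.multiset_prod_nonneg s p hp)
      (le_trans (hp a) (hpq a))

theorem BerkAux.N_multiset_prod (habv : IsNonarchAbs abv) (hN : IsMultSeminorm abv N)
    (s : Multiset K) :
    N ((s.map fun a => X - C a).prod) = (s.map fun a => N (X - C a)).prod := by
  induction s using Multiset.induction_on with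
  | empty => simpa using BerkAux.N_one habv hN
  | cons a s ih =>
    rw [Multiset.map_cons, Multiset.prod_cons, Multiset.map_cons, Multiset.prod_cons,
      hN.2.2.2, ih]

theorem BerkAux.fact [IsAlgClosed K] (habv : IsNonarchAbs abv) (hN : IsMultSeminorm abv N)
    {f : Polynomial K} (hf : f ≠ 0) :
    N f = abv f.leadingCoeff * (f.roots.map fun a => N (X - C a)).prod := by
  have hsplit : f.Splits := IsAlgClosed.splits f
  have heq := hsplit.eq_prod_roots
  calc N f = N (C f.leadingCoeff * (f.roots.map fun a => X - C a).prod) := by rw [← heq]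
    _ = abv f.leadingCoeff * N ((f.roots.map fun a => X - C a).prod) := by
        rw [BerkAux.N_C_mul hN]
    _ = abv f.leadingCoeff * (f.roots.map fun a => N (X - C a)).prod := by
        rw [BerkAux.N_multiset_prod habv hN]

theorem BerkAux.cmp [IsAlgClosed K] (habv : IsNonarchAbs abv) (hN₁ : IsMultSeminorm abv N₁)
    (hN₂ : IsMultSeminorm abv N₂) (h : ∀ a : K, N₁ (X - C a) ≤ N₂ (X - C a)) :
    ∀ f, N₁ f ≤ N₂ f := by
  intro f
  by_cases hf : f = 0
  · rw [hf, BerkAux.N_zero habv hN₁, BerkAux.N_zero habv hN₂]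
  rw [BerkAux.fact habv hN₁ hf, BerkAux.fact habv hN₂ hf]
  refine mul_le_mul_of_nonneg_left ?_ (habv.1 _)
  exact BerkAux.multiset_prod_le f.roots _ _ (fun a => hN₁.1 _) h

end Factorization

section PointLemmas

variable {K : Type*} [Field K] {abv : K → ℝ} {N : Polynomial K → ℝ}

/-- Moving the point of a linear factor. -/
theorem BerkAux.gen (habv : IsNonarchAbs abv) (hN : IsMultSeminorm abv N) (b c : K) :
    N (X - C b) ≤ max (N (X - C c)) (abv (b - c)) := by
  have h : (X - C b : Polynomial K) = (X - C c) + C (c - b) := by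
    rw [map_sub]; ring
  rw [h]
  refine le_trans (BerkAux.N_add_le_max habv hN _ _) ?_
  rw [hN.2.1, BerkAux.abv_sub_comm habv c b]

theorem BerkAux.gen2 (habv : IsNonarchAbs abv) (hN : IsMultSeminorm abv N) (b c : K) :
    abv (b - c) ≤ max (N (X - C b)) (N (X - C c)) := by
  have h : (C (b - c) : Polynomial K) = (X - C c) + (-(X - C b)) := by
    rw [map_sub]; ring
  have := BerkAux.N_add_le_max habv hN (X - C c) (-(X - C b))
  rw [← h, hN.2.1, BerkAux.N_neg habv hN] at this
  rw [max_comm] at this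
  exact this

theorem BerkAux.u1 (habv : IsNonarchAbs abv) (hN : IsMultSeminorm abv N) (b c : K)
    (h : abv (c - b) < N (X - C b)) : N (X - C c) = N (X - C b) := by
  have h1 : N (X - C c) ≤ N (X - C b) := by
    refine le_trans (BerkAux.gen habv hN c b) ?_
    rw [max_eq_left h.le]
  have h2 := BerkAux.gen habv hN b c
  rw [BerkAux.abv_sub_comm habv b c] at h2
  rcases le_max_iff.mp h2 with h' | h'
  · exact le_antisymm h1 h'
  · linarith
theorem BerkAux.u2 (habv : IsNonarchAbs abv) (hN : IsMultSeminorm abv N) (b c : K)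
    (h : N (X - C b) < abv (c - b)) : N (X - C c) = abv (c - b) := by
  have h2 := BerkAux.gen2 habv hN b c
  rw [BerkAux.abv_sub_comm habv b c] at h2
  have h3 : abv (c - b) ≤ N (X - C c) := by
    rcases le_max_iff.mp h2 with h' | h'
    · linarith
    · exact h'
  have h4 : N (X - C c) ≤ abv (c - b) := by
    refine le_trans (BerkAux.gen habv hN c b) ?_
    rw [max_eq_right h.le]
  exact le_antisymm h4 h3

end PointLemmas

/-- Every pair of points of the Berkovich affine line, ordered pointwise, has a unique
least upper bound. -/
theorem stmt5 {K : Type*} [Field K] [IsAlgClosed K] (abv : K → ℝ)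
    (habv : IsNonarchAbs abv)
    (hnontriv : ∃ x : K, abv x ≠ 0 ∧ abv x ≠ 1)
    (hcomplete : ∀ s : ℕ → K,
      (∀ ε : ℝ, 0 < ε → ∃ N, ∀ m ≥ N, ∀ n ≥ N, abv (s m - s n) < ε) →
      ∃ x : K, ∀ ε : ℝ, 0 < ε → ∃ N, ∀ n ≥ N, abv (s n - x) < ε) :
    ∀ ξ ξ' : BerkLine K abv, ∃! ζ : BerkLine K abv,
      (∀ f, ξ.1 f ≤ ζ.1 f) ∧ (∀ f, ξ'.1 f ≤ ζ.1 f) ∧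
      ∀ ζ' : BerkLine K abv,
        (∀ f, ξ.1 f ≤ ζ'.1 f) → (∀ f, ξ'.1 f ≤ ζ'.1 f) → ∀ f, ζ.1 f ≤ ζ'.1 f := by
  intro ξ ξ'
  set u : K → ℝ := fun b => ξ.1 (X - C b) with hu
  set v : K → ℝ := fun b => ξ'.1 (X - C b) with hv
  by_cases hcase : ∀ b : K, v b ≤ u b
  · -- ξ' ≤ ξ, so the lub is ξ itself
    have hle : ∀ f, ξ'.1 f ≤ ξ.1 f := BerkAux.cmp habv ξ'.2 ξ.2 hcase
    refine ⟨ξ, ⟨fun f => le_rfl, hle, fun ζ' h1 _ => h1⟩, ?_⟩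
    rintro y ⟨hy1, hy2, hy3⟩
    have hyx : ∀ f, y.1 f ≤ ξ.1 f := hy3 ξ (fun f => le_rfl) hle
    exact Subtype.ext (funext fun f => le_antisymm (hyx f) (hy1 f))
  · push_neg at hcase
    obtain ⟨b, hb⟩ := hcase
    -- hb : u b < v b
    set R := v b with hR
    have hR0 : 0 ≤ R := ξ'.2.1 _
    set m : K → ℝ := fun c => max (u c) (v c) with hm
    have hmb : m b = R := max_eq_right hb.le
    -- R is the minimum of m
    have hmin : ∀ c, R ≤ m c := by
      intro c
      rcases lt_trichotomy (abv (c - b)) R with hd | hd | hd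
      · have := BerkAux.u1 habv ξ'.2 b c hd
        calc R = v c := this.symm
          _ ≤ m c := le_max_right _ _
      · by_contra hcon
        push_neg at hcon
        have huc : u c < abv (b - c) := by
          rw [BerkAux.abv_sub_comm habv b c, hd]
          exact lt_of_le_of_lt (le_max_left _ _) hcon
        have h5 : u b = abv (b - c) := BerkAux.u2 habv ξ.2 c b huc
        rw [BerkAux.abv_sub_comm habv b c, hd] at h5
        rw [h5] at hb
        exact lt_irrefl _ hb
      · have := BerkAux.u2 habv ξ.2 b c (lt_trans hb hd)
        calc R ≤ abv (c - b) := hd.le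
          _ = u c := this.symm
          _ ≤ m c := le_max_left _ _
    -- m is the disc function of the disc D(b, R)
    have hmval : ∀ c, m c = max R (abv (c - b)) := by
      intro c
      rcases le_or_gt (abv (c - b)) R with hd | hd
      · rw [max_eq_left hd]
        refine le_antisymm ?_ (hmin c)
        have h1 : u c ≤ R := le_trans (BerkAux.gen habv ξ.2 c b) (max_le hb.le hd)
        have h2 : v c ≤ R := le_trans (BerkAux.gen habv ξ'.2 c b) (max_le le_rfl hd)
        exact max_le h1 h2
      · rw [max_eq_right hd.le]
        have h1 : u c = abv (c - b) := BerkAux.u2 habv ξ.2 b c (lt_trans hb hd)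
        have h2 : v c = abv (c - b) := BerkAux.u2 habv ξ'.2 b c hd
        simp only [hm, h1, h2, max_self]
    -- the Gauss norm of the disc D(b, R)
    set Z : Polynomial K → ℝ := fun f => BerkAux.G abv R (f.comp (X + C b)) with hZdef
    have hZ : IsMultSeminorm abv Z := by
      refine ⟨fun f => BerkAux.G_nonneg habv hR0 _, fun c => ?_, fun f g => ?_, fun f g => ?_⟩
      · simp only [hZdef, Polynomial.C_comp]
        exact BerkAux.G_C habv hR0 c
      · simp only [hZdef, Polynomial.add_comp]
        refine le_trans (BerkAux.G_add_le_max habv hR0 _ _) ?_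
        exact max_le (le_add_of_nonneg_right (BerkAux.G_nonneg habv hR0 _))
          (le_add_of_nonneg_left (BerkAux.G_nonneg habv hR0 _))
      · simp only [hZdef, Polynomial.mul_comp]
        exact BerkAux.G_mul habv hR0 _ _
    have hZm : ∀ c, Z (X - C c) = m c := by
      intro c
      have hcomp : (X - C c : Polynomial K).comp (X + C b) = X + C (b - c) := by
        rw [Polynomial.sub_comp, Polynomial.X_comp, Polynomial.C_comp, map_sub]
        ring
      simp only [hZdef, hcomp]
      rw [BerkAux.G_X_add_C habv hR0, hmval c, BerkAux.abv_sub_comm habv b c, max_comm]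
    have hup1 : ∀ f, ξ.1 f ≤ Z f := by
      refine BerkAux.cmp habv ξ.2 hZ fun a => ?_
      rw [hZm a]
      exact le_max_left _ _
    have hup2 : ∀ f, ξ'.1 f ≤ Z f := by
      refine BerkAux.cmp habv ξ'.2 hZ fun a => ?_
      rw [hZm a]
      exact le_max_right _ _
    have hleast : ∀ ζ' : BerkLine K abv,
        (∀ f, ξ.1 f ≤ ζ'.1 f) → (∀ f, ξ'.1 f ≤ ζ'.1 f) → ∀ f, Z f ≤ ζ'.1 f := by
      intro ζ' h1 h2
      refine BerkAux.cmp habv hZ ζ'.2 fun a => ?_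
      rw [hZm a]
      exact max_le (h1 _) (h2 _)
    refine ⟨⟨Z, hZ⟩, ⟨hup1, hup2, hleast⟩, ?_⟩
    rintro y ⟨hy1, hy2, hy3⟩
    have hyZ : ∀ f, y.1 f ≤ Z f := hy3 ⟨Z, hZ⟩ hup1 hup2
    have hZy : ∀ f, Z f ≤ y.1 f := hleast y hy1 hy2
    exact Subtype.ext (funext fun f => le_antisymm (hyZ f) (hZy f))
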